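/- If a rooted cactus graph (H,x) has a non-trivial automorphism (an automorphism of H other than the identity that fixes x), then it has an involution (an involution of H that fixes x). -/

import Mathlib

open SimpleGraph

/-- The number of walks of length `n` from `u` to `v` in `G`. -/
noncomputable def walkCount {V : Type*} (G : SimpleGraph V) (n : ℕ) (u v : V) : ℕ :=
  Nat.card {w : G.Walk u v // w.length = n}

/-- The degree of a vertex, as the cardinality of its neighbour set. -/
noncomputable def vdeg {V : Type*} (G : SimpleGraph V) (v : V) : ℕ :=
  (G.neighborSet v).ncard

/-- An involution of a graph: an automorphism of order two. -/
def IsInvolution {V : Type*} (G : SimpleGraph V) (σ : G ≃g G) : Prop :=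
  σ.toEquiv ≠ Equiv.refl V ∧ ∀ v, σ (σ v) = v

/-- A graph is involution-free if it has no involution. -/
def InvolutionFree {V : Type*} (G : SimpleGraph V) : Prop :=
  ¬ ∃ σ : G ≃g G, IsInvolution G σ

/-- A rooted graph `(G, x)` is involution-free if `G` has no involution fixing `x`. -/
def RootedInvolutionFree {V : Type*} (G : SimpleGraph V) (x : V) : Prop :=
  ¬ ∃ σ : G ≃g G, IsInvolution G σ ∧ σ x = x

/-- Every edge of `G` belongs to at most one cycle: any two cycles sharing an
edge have the same edge set. -/
def EdgesOnAtMostOneCycle {V : Type*} (G : SimpleGraph V) : Prop :=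
  ∀ (a b : V) (c : G.Walk a a) (d : G.Walk b b), c.IsCycle → d.IsCycle →
    ∀ e, e ∈ c.edges → e ∈ d.edges → ∀ f, f ∈ c.edges ↔ f ∈ d.edges

/-- A cactus graph: a connected simple graph in which every edge belongs to at
most one cycle. -/
def IsCactus {V : Type*} (G : SimpleGraph V) : Prop :=
  G.Connected ∧ EdgesOnAtMostOneCycle G

/-- The distance from a vertex to a set of vertices. -/
noncomputable def setDist {V : Type*} (G : SimpleGraph V) (v : V) (S : Set V) : ℕ :=
  sInf (G.dist v '' S)

/-- A hardness gadget `(β, s, t, O, i, K, k, w)` in a graph `G`. -/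
structure HardnessGadget {V : Type*} (G : SimpleGraph V) where
  β : ℕ
  s : V
  t : V
  i : V
  O : Set V
  K : Set V
  k : V → ℕ
  w : V → V
  β_pos : 0 < β
  i_not_in_O : i ∉ O
  i_not_in_K : i ∉ K
  O_disj_K : Disjoint O K
  nbhd_partition : O ∪ {i} ∪ K = G.neighborSet s
  O_odd : Odd O.ncard
  s_unique : ∀ o ∈ O, ∀ y ∈ O ∪ {i}, ∀ z : V,
    (G.Adj z o ∧ G.Adj z y ∧ Odd (walkCount G β z t)) ↔ z = s
  i_t_even : Even (walkCount G (1 + β) i t)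
  k_pos : ∀ u ∈ K, 0 < k u
  w_walks : ∀ u ∈ K, Even (walkCount G (k u) (w u) u) ∧
    ∀ y ∈ O ∪ {i}, Odd (walkCount G (k u) (w u) y)

/-- The distance requirements of a hardness gadget with respect to a vertex `v`. -/
def HardnessGadget.SatisfiesDistReq {V : Type*} {G : SimpleGraph V}
    (Γ : HardnessGadget G) (v : V) : Prop :=
  ((setDist G v (Γ.O ∪ {Γ.i}) : ℤ) + (G.dist v Γ.t : ℤ) > (Γ.β : ℤ) - 1) ∧
  ∀ u ∈ Γ.K, ((G.dist v (Γ.w u) : ℤ) + (setDist G v (Γ.O ∪ {Γ.i, u}) : ℤ)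
      > (Γ.k u : ℤ) - 2)

/-- `P` is the unique shortest path between its endpoints. -/
def IsUniqueShortestPath {V : Type*} (G : SimpleGraph V) {u v : V}
    (P : G.Walk u v) : Prop :=
  P.IsPath ∧ ∀ Q : G.Walk u v, Q.IsPath → Q.length ≤ P.length → Q = P

/-- The graph `G` contains a cycle. -/
def HasCycle {V : Type*} (G : SimpleGraph V) : Prop :=
  ∃ (a : V) (c : G.Walk a a), c.IsCycle

/-- The edge `e` lies on a 4-cycle of `G`. -/
def EdgeOnFourCycle {V : Type*} (G : SimpleGraph V) (e : Sym2 V) : Prop :=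
  ∃ (a : V) (c : G.Walk a a), c.IsCycle ∧ c.length = 4 ∧ e ∈ c.edges

/-- An unbristled mosaic: the one-vertex rooted graph, or a rooted cactus graph
that is a union of 4-cycles. -/
def IsUnbristledMosaic {V : Type*} (G : SimpleGraph V) (x : V) : Prop :=
  (∀ v : V, v = x) ∨ (IsCactus G ∧ ∀ e ∈ G.edgeSet, EdgeOnFourCycle G e)

/-- A mosaic: a rooted graph obtained from an unbristled mosaic on a vertex
subset `V'` containing the root by attaching a perfect matching ("bristles")
between the remaining vertices and a subset of `V'`. -/
def IsMosaic {V : Type*} (G : SimpleGraph V) (x : V) : Prop :=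
  ∃ (V' : Set V) (hx : x ∈ V'),
    IsUnbristledMosaic (G.induce V') ⟨x, hx⟩ ∧
    (∀ v, v ∉ V' → ∀ u, G.Adj v u → u ∈ V') ∧
    (∀ v, v ∉ V' → ∃! u, G.Adj v u) ∧
    (∀ u v₁ v₂, v₁ ∉ V' → v₂ ∉ V' → G.Adj u v₁ → G.Adj u v₂ → v₁ = v₂)

/-- A proper mosaic: a mosaic containing at least one cycle. -/
def IsProperMosaic {V : Type*} (G : SimpleGraph V) (x : V) : Prop :=
  IsMosaic G x ∧ HasCycle G

/-- A shortcut in the rooted graph `(G, x)`: a pair of distinct odd-degree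
vertices of degree at least 3 with a unique shortest path between them that
avoids `x`. -/
def HasShortcut {V : Type*} (G : SimpleGraph V) (x : V) : Prop :=
  ∃ v₁ v₂ : V, v₁ ≠ v₂ ∧ Odd (vdeg G v₁) ∧ Odd (vdeg G v₂) ∧
    3 ≤ vdeg G v₁ ∧ 3 ≤ vdeg G v₂ ∧
    ∃ P : G.Walk v₁ v₂, IsUniqueShortestPath G P ∧ x ∉ P.support

/-- A 2,3-path `(P, v₂, v₃)` in a rooted graph: `v₂` and `v₃` lie on a common
cycle, have degrees 2 and 3 respectively, and the extensions of `P` by `v₂`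
and by `v₃` are unique shortest paths from the root. -/
def Is23Path {V : Type*} (G : SimpleGraph V) {x z : V} (P : G.Walk x z)
    (v₂ v₃ : V) : Prop :=
  (∃ (a : V) (c : G.Walk a a), c.IsCycle ∧ v₂ ∈ c.support ∧ v₃ ∈ c.support) ∧
  vdeg G v₂ = 2 ∧ vdeg G v₃ = 3 ∧
  (∃ h₂ : G.Adj z v₂, IsUniqueShortestPath G (P.concat h₂)) ∧
  (∃ h₃ : G.Adj z v₃, IsUniqueShortestPath G (P.concat h₃))

/-- A partial hardness gadget `(s, i, O, P)` in the rooted graph `(G, x)`. -/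
def IsPartialHardnessGadget {V : Type*} (G : SimpleGraph V) (x s i : V)
    (O : Set V) (P : G.Walk x i) : Prop :=
  i ∉ O ∧ insert i O = G.neighborSet s ∧ Odd O.ncard ∧
  IsUniqueShortestPath G P ∧
  ∃ his : G.Adj i s, IsUniqueShortestPath G (P.concat his) ∧
    ∀ o ∈ O, ∃ hso : G.Adj s o, IsUniqueShortestPath G ((P.concat his).concat hso)

/-- `C` is (the vertex set of) a connected component of `G - {x}`, i.e. of the
split of `G` at `x`; the corresponding member of the split is the subgraph of
`G` induced by `C ∪ {x}`. -/
def IsSplitComponent {V : Type*} (G : SimpleGraph V) (x : V) (C : Set V) : Prop :=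
  x ∉ C ∧ C.Nonempty ∧ (G.induce C).Connected ∧
  ∀ u ∈ C, ∀ v : V, G.Adj u v → v ≠ x → v ∈ C

/-- `x` is a cut vertex: `G - {x}` has at least two connected components. -/
def IsCutVertex {V : Type*} (G : SimpleGraph V) (x : V) : Prop :=
  ∃ C₁ C₂ : Set V, IsSplitComponent G x C₁ ∧ IsSplitComponent G x C₂ ∧ C₁ ≠ C₂

/-- If a rooted cactus graph `(H, x)` has a non-trivial automorphism (fixing
the root `x`), then it has an involution (fixing `x`). -/
-- odd order case key lemma
lemma cactusOddKeyAux {V : Type*} [Fintype V] (G : SimpleGraph V) (x : V)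
    (hc : IsCactus G) (p : Equiv.Perm V)
    (hA : ∀ u v, G.Adj (p u) (p v) ↔ G.Adj u v) (hx : p x = x)
    (hodd : Odd (orderOf p)) (hp : p ≠ 1) :
    ∃ (f : V → V), Function.Involutive f ∧ (∀ u v, G.Adj u v → G.Adj (f u) (f v)) ∧
      f x = x ∧ f ≠ id := by
  classical
  -- a moved vertex of minimal distance to x
  have hex : ∃ v, p v ≠ v := by
    by_contra h
    push_neg at h
    exact hp (Equiv.ext h)
  obtain ⟨v₀, hv₀⟩ := hex
  obtain ⟨y, hyS, hymin⟩ := (Finset.univ.filter (fun v => p v ≠ v)).exists_min_image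
    (G.dist x) ⟨v₀, by simp [hv₀]⟩
  have hy : p y ≠ y := by simpa using hyS
  have hfix : ∀ v, G.dist x v < G.dist x y → p v = v := by
    intro v hv
    by_contra h
    exact absurd (hymin v (by simp [h])) (not_le.2 hv)
  have hyx : y ≠ x := fun h => hy (h ▸ hx)
  -- shortest walk from x to y; z = predecessor of y
  obtain ⟨w, hw⟩ := hc.1.exists_walk_length_eq_dist x y
  have hd0 : w.reverse.length ≠ 0 := by
    rw [Walk.length_reverse, hw]
    intro h
    exact hyx ((Walk.eq_of_length_eq_zero (hw ▸ h : w.length = 0))).symm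
  have hnn : ¬ w.reverse.Nil := by rw [Walk.nil_iff_length_eq]; exact hd0
  obtain ⟨z, hzy', q, hq⟩ := Walk.not_nil_iff.mp hnn
  have hzy : G.Adj z y := hzy'.symm
  have hdz : G.dist x z < G.dist x y := by
    have h1 : G.dist x z ≤ q.reverse.length := dist_le _
    have h2 : q.length + 1 = G.dist x y := by
      have := congrArg Walk.length hq
      rw [Walk.length_reverse, hw] at this
      simpa [Nat.add_comm] using this.symm
    rw [Walk.length_reverse] at h1
    omega
  have hz : p z = z := hfix z hdz
  have hz' : p⁻¹ z = z := by
    apply p.injective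
    rw [Equiv.Perm.inv_def, Equiv.apply_symm_apply, hz]
  have hzpy : G.Adj z (p y) := by
    have := (hA z y).mpr hzy
    rwa [hz] at this
  -- the two "branches" at z
  set B : V → Prop := fun v => ∃ w : G.Walk y v, z ∉ w.support with hBdef
  set B' : V → Prop := fun v => ∃ w : G.Walk (p y) v, z ∉ w.support with hB'def
  have hyB : B y := ⟨Walk.nil, by simp [hzy.ne]⟩
  have hpyB' : B' (p y) := ⟨Walk.nil, by simp [hzpy.ne]⟩
  have hzB : ¬ B z := fun ⟨w', h'⟩ => h' w'.end_mem_support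
  have hzB' : ¬ B' z := fun ⟨w', h'⟩ => h' w'.end_mem_support
  -- homs
  have hA' : ∀ u v, G.Adj (p⁻¹ u) (p⁻¹ v) ↔ G.Adj u v := by
    intro u v
    have := hA (p⁻¹ u) (p⁻¹ v)
    rw [Equiv.Perm.inv_def, Equiv.apply_symm_apply, Equiv.apply_symm_apply] at this
    exact this.symm
  let φ : G →g G := ⟨⇑p, fun h => (hA _ _).mpr h⟩
  let φ' : G →g G := ⟨⇑p⁻¹, fun h => (hA' _ _).mpr h⟩
  have hBB' : ∀ v, B v → B' (p v) := by
    rintro v ⟨w', h'⟩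
    refine ⟨w'.map φ, ?_⟩
    rw [Walk.support_map]
    intro hmem
    obtain ⟨a, ha, hpa⟩ := List.mem_map.mp hmem
    have : a = z := by
      apply p.injective
      rw [hz]; exact hpa
    exact h' (this ▸ ha)
  have hB'B : ∀ v, B' v → B (p⁻¹ v) := by
    rintro v ⟨w', h'⟩
    refine ⟨(w'.map φ').copy (p.symm_apply_apply y) rfl, ?_⟩
    rw [Walk.support_copy, Walk.support_map]
    intro hmem
    obtain ⟨a, ha, hpa⟩ := List.mem_map.mp hmem
    have : a = z := by
      apply p⁻¹.injective
      rw [hz']; exact hpa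
    exact h' (this ▸ ha)
  have hdisj : ∀ v, B v → B' v → False := by
    rintro v ⟨w1, h1⟩ ⟨w2, h2⟩
    have h3 : z ∉ (w1.append w2.reverse).support := by
      intro h
      rcases (Walk.mem_support_append_iff _ _).mp h with h | h
      · exact h1 h
      · rw [Walk.support_reverse] at h
        exact h2 (List.mem_reverse.mp h)
    have hq0 : z ∉ ((w1.append w2.reverse).toPath : G.Walk y (p y)).support :=
      fun h => h3 (Walk.support_toPath_subset _ h)
    set q0 : G.Walk y (p y) := ↑((w1.append w2.reverse).toPath) with hq0def
    have hq0path : q0.IsPath := ((w1.append w2.reverse).toPath).property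
    have hpath : (q0.concat hzpy.symm).IsPath := by
      rw [Walk.isPath_def, Walk.support_concat]
      rw [List.nodup_append]
      refine ⟨hq0path.support_nodup, List.nodup_singleton z, ?_⟩
      intro a ha b hb
      rw [List.mem_singleton] at hb
      subst hb
      rintro rfl; exact hq0 ha
    set c : G.Walk z z := Walk.cons hzy (q0.concat hzpy.symm) with hcdef
    have hcyc : c.IsCycle := by
      rw [hcdef, Walk.cons_isCycle_iff]
      refine ⟨hpath, ?_⟩
      rw [Walk.edges_concat, List.concat_eq_append]
      simp only [List.mem_append, List.mem_singleton]
      rintro (h | h)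
      · exact hq0 (Walk.fst_mem_support_of_mem_edges _ h)
      · rw [Sym2.eq_iff] at h
        rcases h with ⟨h1, _⟩ | ⟨_, h2⟩
        · exact hzpy.ne h1
        · exact hy h2.symm
    have hinj : Function.Injective ⇑φ := p.injective
    have hcyc' : (c.map φ).IsCycle := hcyc.map hinj
    have he1 : s(z, y) ∈ c.edges := by
      rw [hcdef, Walk.edges_cons]
      exact List.mem_cons_self
    have he2 : s(z, p y) ∈ c.edges := by
      rw [hcdef, Walk.edges_cons, Walk.edges_concat, List.concat_eq_append]
      simp only [List.mem_cons, List.mem_append, List.not_mem_nil, or_false]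
      right; right
      exact Sym2.eq_swap
    have hmape : ∀ a b : V, s(a, b) ∈ c.edges → s(p a, p b) ∈ (c.map φ).edges := by
      intro a b hab
      rw [Walk.edges_map]
      refine List.mem_map.mpr ⟨s(a, b), hab, ?_⟩
      rfl
    have he2' : s(z, p y) ∈ (c.map φ).edges := by
      have := hmape z y he1
      rwa [hz] at this
    have hkey := hc.2 z (φ z) c (c.map φ) hcyc hcyc' (s(z, p y)) he2 he2' (s(z, p (p y)))
    have hmem2 : s(z, p (p y)) ∈ c.edges := by
      apply hkey.mpr
      have := hmape z (p y) he2
      rwa [hz] at this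
    have hchar : ∀ w', s(z, w') ∈ c.edges → w' = y ∨ w' = p y := by
      intro w' hmem
      rw [hcdef, Walk.edges_cons, Walk.edges_concat, List.concat_eq_append] at hmem
      simp only [List.mem_cons, List.mem_append, List.not_mem_nil, or_false] at hmem
      rcases hmem with h | h | h
      · rw [Sym2.eq_iff] at h
        rcases h with ⟨_, h2⟩ | ⟨h1, _⟩
        · exact Or.inl h2
        · exact absurd h1 hzy.ne
      · exact absurd (Walk.fst_mem_support_of_mem_edges _ h) hq0
      · rw [Sym2.eq_iff] at h
        rcases h with ⟨h1, _⟩ | ⟨_, h2⟩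
        · exact absurd h1 hzpy.ne
        · exact Or.inr h2
    rcases hchar (p (p y)) hmem2 with h | h
    · -- p (p y) = y together with odd order gives p y = y
      obtain ⟨k, hk⟩ := hodd
      have hp2 : (p ^ 2) y = y := by
        rw [pow_two, Equiv.Perm.mul_apply, h]
      have hiter : ∀ m : ℕ, (p ^ (2 * m)) y = y := by
        intro m
        induction m with
        | zero => simp
        | succ m ih =>
          have h2 : 2 * (m + 1) = 2 * m + 2 := by ring
          rw [h2, pow_add, Equiv.Perm.mul_apply, hp2, ih]
      have h3 : (p ^ (2 * (k + 1))) y = y := hiter (k + 1)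
      have h4 : 2 * (k + 1) = orderOf p + 1 := by omega
      rw [h4, pow_succ, Equiv.Perm.mul_apply, pow_orderOf_eq_one] at h3
      exact hy (by simpa using h3)
    · exact hy (p.injective h)
  -- branch-closure lemmas
  have hBadj : ∀ u v, B u → G.Adj u v → v ≠ z → B v := by
    rintro u v ⟨w', h'⟩ hadj hvz
    refine ⟨w'.concat hadj, ?_⟩
    rw [Walk.support_concat]
    intro hmem
    rcases List.mem_append.mp hmem with h | h
    · exact h' h
    · exact hvz (List.mem_singleton.mp h).symm
  have hB'adj : ∀ u v, B' u → G.Adj u v → v ≠ z → B' v := by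
    rintro u v ⟨w', h'⟩ hadj hvz
    refine ⟨w'.concat hadj, ?_⟩
    rw [Walk.support_concat]
    intro hmem
    rcases List.mem_append.mp hmem with h | h
    · exact h' h
    · exact hvz (List.mem_singleton.mp h).symm
  -- the involution
  set f : V → V := fun v => if B v then p v else if B' v then p⁻¹ v else v with hf
  have happ1 : ∀ v, B v → f v = p v := fun v hv => by rw [hf]; simp only [hv, if_true]
  have happ2 : ∀ v, ¬ B v → B' v → f v = p⁻¹ v := fun v hv hv' => by
    rw [hf]; simp only [hv, hv', if_true, if_false]
  have happ3 : ∀ v, ¬ B v → ¬ B' v → f v = v := fun v hv hv' => by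
    rw [hf]; simp only [hv, hv', if_false]
  have hinv : Function.Involutive f := by
    intro v
    by_cases hv : B v
    · have h1 : B' (p v) := hBB' v hv
      have h2 : ¬ B (p v) := fun hh => hdisj _ hh h1
      rw [happ1 v hv, happ2 _ h2 h1, Equiv.Perm.inv_def, Equiv.symm_apply_apply]
    · by_cases hv' : B' v
      · have h1 : B (p⁻¹ v) := hB'B v hv'
        rw [happ2 v hv hv', happ1 _ h1, Equiv.Perm.inv_def, Equiv.apply_symm_apply]
      · rw [happ3 v hv hv', happ3 v hv hv']
  have hadjf : ∀ u v, G.Adj u v → G.Adj (f u) (f v) := by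
    intro u v huv
    by_cases hu : B u <;> by_cases hv : B v
    · rw [happ1 u hu, happ1 v hv]; exact (hA u v).mpr huv
    · by_cases hvz : v = z
      · rw [happ1 u hu, hvz, happ3 z hzB hzB']
        have := (hA u z).mpr (hvz ▸ huv)
        rwa [hz] at this
      · exact absurd (hBadj u v hu huv hvz) hv
    · by_cases huz : u = z
      · rw [happ1 v hv, huz, happ3 z hzB hzB']
        have := (hA z v).mpr (huz ▸ huv)
        rwa [hz] at this
      · exact absurd (hBadj v u hv huv.symm huz) hu
    · by_cases hu' : B' u <;> by_cases hv' : B' v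
      · rw [happ2 u hu hu', happ2 v hv hv']; exact (hA' u v).mpr huv
      · by_cases hvz : v = z
        · rw [happ2 u hu hu', hvz, happ3 z hzB hzB']
          have := (hA' u z).mpr (hvz ▸ huv)
          rwa [hz'] at this
        · exact absurd (hB'adj u v hu' huv hvz) hv'
      · by_cases huz : u = z
        · rw [happ2 v hv hv', huz, happ3 z hzB hzB']
          have := (hA' z v).mpr (huz ▸ huv)
          rwa [hz'] at this
        · exact absurd (hB'adj v u hv' huv.symm huz) hu'
      · rw [happ3 u hu hu', happ3 v hv hv']; exact huv
  have hxB : ¬ B x := by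
    intro h
    have h2 := hBB' x h
    rw [hx] at h2
    exact hdisj x h h2
  have hxB' : ¬ B' x := by
    intro h
    have h2 := hB'B x h
    rw [show p⁻¹ x = x from by apply p.injective; rw [Equiv.Perm.inv_def, Equiv.apply_symm_apply, hx]] at h2
    exact hdisj x h2 h
  refine ⟨f, hinv, hadjf, happ3 x hxB hxB', ?_⟩
  intro h
  have h2 : f y = y := congrFun h y
  rw [happ1 y hyB] at h2
  exact hy h2


theorem rooted_cactus_nontrivialAut_involution {V : Type*} [Fintype V]
    (G : SimpleGraph V) (x : V) (hcactus : IsCactus G)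
    (hnt : ∃ π : G ≃g G, π x = x ∧ π.toEquiv ≠ Equiv.refl V) :
    ∃ σ : G ≃g G, IsInvolution G σ ∧ σ x = x := by

  classical
  obtain ⟨π, hπx, hπne⟩ := hnt
  set p : Equiv.Perm V := π.toEquiv with hpdef
  have hA : ∀ u v, G.Adj (p u) (p v) ↔ G.Adj u v := fun u v => π.map_adj_iff
  have hpx : p x = x := hπx
  have hp1 : p ≠ 1 := fun h => hπne (h.trans (Equiv.Perm.one_def).symm ▸ rfl)
  have hApow : ∀ k : ℕ, ∀ u v, G.Adj ((p ^ k) u) ((p ^ k) v) ↔ G.Adj u v := by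
    intro k
    induction k with
    | zero => simp
    | succ k ih =>
      intro u v
      rw [pow_succ, Equiv.Perm.mul_apply, Equiv.Perm.mul_apply]
      exact (ih _ _).trans (hA u v)
  have hxpow : ∀ k : ℕ, (p ^ k) x = x := by
    intro k
    induction k with
    | zero => simp
    | succ k ih => rw [pow_succ, Equiv.Perm.mul_apply, hpx, ih]
  rcases Nat.even_or_odd (orderOf p) with he | ho
  · obtain ⟨m, hm⟩ := he
    have hn0 : orderOf p ≠ 0 := (orderOf_pos p).ne'
    have hm0 : m ≠ 0 := by
      intro h
      rw [h] at hm
      exact hn0 (by omega)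
    have hne : p ^ m ≠ 1 := by
      intro h
      have hd := orderOf_dvd_of_pow_eq_one h
      have := Nat.le_of_dvd (Nat.pos_of_ne_zero hm0) hd
      omega
    have hsq : ∀ v, (p ^ m) ((p ^ m) v) = v := by
      intro v
      have h1 : p ^ m * p ^ m = 1 := by rw [← pow_add, ← hm, pow_orderOf_eq_one]
      calc (p ^ m) ((p ^ m) v) = (p ^ m * p ^ m) v := (Equiv.Perm.mul_apply _ _ _).symm
        _ = v := by rw [h1]; rfl
    refine ⟨⟨p ^ m, fun {a b} => hApow m a b⟩, ⟨?_, hsq⟩, hxpow m⟩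
    intro h
    exact hne (h.trans (Equiv.Perm.one_def).symm)
  · obtain ⟨f, hinv, hadjf, hfx, hfne⟩ := cactusOddKeyAux G x hcactus p hA hpx ho hp1
    have hiff : ∀ u v, G.Adj (f u) (f v) ↔ G.Adj u v := fun u v =>
      ⟨fun h => by have := hadjf _ _ h; rwa [hinv u, hinv v] at this, hadjf u v⟩
    refine ⟨⟨Function.Involutive.toPerm f hinv, fun {a b} => hiff a b⟩, ⟨?_, hinv⟩, hfx⟩
    intro h
    apply hfne
    funext v
    exact Equiv.ext_iff.mp h v
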